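/- Let N ≥ 2 and 0 ≤ k ≤ N. The barycenter B_k of the outer products v vᵀ over all sign vectors v ∈ {−1,1}^N with exactly k entries equal to −1 (there are binom(N,k) of them) lies on the line connecting the identity 1_N and the all-ones matrix A₀; precisely, B_k = (1 − 4k(N−k)/(N(N−1)))·A₀ + (4k(N−k)/(N(N−1)))·1_N. -/

import Mathlib

open Matrix

private lemma count_one (N k : ℕ) (hN : 1 ≤ N) (i : Fin N) :
    ((Finset.powersetCard k (Finset.univ : Finset (Fin N))).filter (fun S => i ∈ S)).card * N
      = k * N.choose k := by
  rcases k with _ | k'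
  · have h0 : ((Finset.powersetCard 0 (Finset.univ : Finset (Fin N))).filter
        (fun S => i ∈ S)) = ∅ := by
      ext S
      simp only [Finset.mem_filter, Finset.mem_powersetCard_univ, Finset.notMem_empty,
        iff_false, not_and]
      intro h hi
      rw [Finset.card_eq_zero] at h
      simp [h] at hi
    rw [h0, Finset.card_empty]
    simp
  · have hcard : ((Finset.powersetCard (k'+1) (Finset.univ : Finset (Fin N))).filter
        (fun S => i ∈ S)).card
        = (Finset.powersetCard k' ((Finset.univ : Finset (Fin N)).erase i)).card := by
      apply Finset.card_nbij' (fun S => S.erase i) (fun T => insert i T)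
      · intro S hS
        simp only [Finset.mem_coe, Finset.mem_filter, Finset.mem_powersetCard_univ] at hS
        simp only [Finset.mem_coe, Finset.mem_powersetCard]
        constructor
        · intro x hx
          simp only [Finset.mem_erase] at hx ⊢
          exact ⟨hx.1, Finset.mem_univ _⟩
        · rw [Finset.card_erase_of_mem hS.2, hS.1]
          omega
      · intro T hT
        simp only [Finset.mem_coe, Finset.mem_powersetCard] at hT
        have hiT : i ∉ T := fun h => by
          have := hT.1 h
          simp at this
        simp only [Finset.mem_coe, Finset.mem_filter, Finset.mem_powersetCard_univ]
        refine ⟨?_, Finset.mem_insert_self _ _⟩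
        rw [Finset.card_insert_of_notMem hiT, hT.2]
      · intro S hS
        simp only [Finset.mem_coe, Finset.mem_filter] at hS
        exact Finset.insert_erase hS.2
      · intro T hT
        simp only [Finset.mem_coe, Finset.mem_powersetCard] at hT
        have hiT : i ∉ T := fun h => by
          have := hT.1 h
          simp at this
        exact Finset.erase_insert hiT
    rw [hcard, Finset.card_powersetCard, Finset.card_erase_of_mem (Finset.mem_univ i),
      Finset.card_univ, Fintype.card_fin]
    have h1 := Nat.add_one_mul_choose_eq (N - 1) k'
    have e1 : N - 1 + 1 = N := by omega
    rw [e1] at h1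
    rw [mul_comm, h1, mul_comm]

private lemma count_two (N k : ℕ) (hN : 2 ≤ N) (i j : Fin N) (hij : i ≠ j) :
    ((Finset.powersetCard k (Finset.univ : Finset (Fin N))).filter
        (fun S => i ∈ S ∧ j ∈ S)).card * (N * (N - 1))
      = k * (k - 1) * N.choose k := by
  rcases k with _ | k'
  · have h0 : ((Finset.powersetCard 0 (Finset.univ : Finset (Fin N))).filter
        (fun S => i ∈ S ∧ j ∈ S)) = ∅ := by
      ext S
      simp only [Finset.mem_filter, Finset.mem_powersetCard_univ, Finset.notMem_empty,
        iff_false, not_and]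
      intro h hi
      rw [Finset.card_eq_zero] at h
      simp [h] at hi
    rw [h0, Finset.card_empty]
    simp
  rcases k' with _ | k''
  · have h0 : ((Finset.powersetCard 1 (Finset.univ : Finset (Fin N))).filter
        (fun S => i ∈ S ∧ j ∈ S)) = ∅ := by
      ext S
      simp only [Finset.mem_filter, Finset.mem_powersetCard_univ, Finset.notMem_empty,
        iff_false, not_and]
      intro h hi' hj'
      rw [Finset.card_eq_one] at h
      obtain ⟨a, ha⟩ := h
      rw [ha, Finset.mem_singleton] at hi' hj'
      exact hij (hi'.trans hj'.symm)
    rw [h0, Finset.card_empty]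
    simp
  · have hcard : ((Finset.powersetCard (k''+2) (Finset.univ : Finset (Fin N))).filter
        (fun S => i ∈ S ∧ j ∈ S)).card
        = (Finset.powersetCard k''
            (((Finset.univ : Finset (Fin N)).erase i).erase j)).card := by
      apply Finset.card_nbij' (fun S => (S.erase i).erase j)
        (fun T => insert i (insert j T))
      · intro S hS
        simp only [Finset.mem_coe, Finset.mem_filter, Finset.mem_powersetCard_univ] at hS
        simp only [Finset.mem_coe, Finset.mem_powersetCard]
        constructor
        · intro x hx
          simp only [Finset.mem_erase] at hx ⊢
          exact ⟨hx.1, hx.2.1, Finset.mem_univ _⟩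
        · rw [Finset.card_erase_of_mem (by
            simp only [Finset.mem_erase]
            exact ⟨Ne.symm hij, hS.2.2⟩),
            Finset.card_erase_of_mem hS.2.1, hS.1]
          omega
      · intro T hT
        simp only [Finset.mem_coe, Finset.mem_powersetCard] at hT
        have hiT : i ∉ T := fun h => by have := hT.1 h; simp at this
        have hjT : j ∉ T := fun h => by have := hT.1 h; simp [Ne.symm hij] at this
        simp only [Finset.mem_coe, Finset.mem_filter, Finset.mem_powersetCard_univ]
        refine ⟨?_, Finset.mem_insert_self _ _,
          Finset.mem_insert_of_mem (Finset.mem_insert_self _ _)⟩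
        rw [Finset.card_insert_of_notMem (by
            simp only [Finset.mem_insert]
            push_neg
            exact ⟨hij, hiT⟩),
          Finset.card_insert_of_notMem hjT, hT.2]
      · intro S hS
        simp only [Finset.mem_coe, Finset.mem_filter, Finset.mem_powersetCard_univ] at hS
        ext x
        simp only [Finset.mem_insert, Finset.mem_erase]
        by_cases hx1 : x = i <;> by_cases hx2 : x = j <;>
          simp [hx1, hx2, hS.2.1, hS.2.2]
      · intro T hT
        simp only [Finset.mem_coe, Finset.mem_powersetCard] at hT
        have hiT : i ∉ T := fun h => by have := hT.1 h; simp at this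
        have hjT : j ∉ T := fun h => by have := hT.1 h; simp [Ne.symm hij] at this
        dsimp only
        rw [Finset.erase_insert (by simp [hij, hiT]), Finset.erase_insert hjT]
    rw [hcard, Finset.card_powersetCard]
    have hc : (((Finset.univ : Finset (Fin N)).erase i).erase j).card = N - 2 := by
      rw [Finset.card_erase_of_mem (by
          simp only [Finset.mem_erase]
          exact ⟨Ne.symm hij, Finset.mem_univ _⟩),
        Finset.card_erase_of_mem (Finset.mem_univ i), Finset.card_univ, Fintype.card_fin]
      omega
    rw [hc]
    have h1 := Nat.add_one_mul_choose_eq (N - 2) k''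
    have h2 := Nat.add_one_mul_choose_eq (N - 1) (k'' + 1)
    have e1 : N - 2 + 1 = N - 1 := by omega
    have e2 : N - 1 + 1 = N := by omega
    rw [e1] at h1
    rw [e2] at h2
    have estep : k'' + 1 + 1 - 1 = k'' + 1 := rfl
    calc (N-2).choose k'' * (N * (N-1)) = N * ((N-1) * (N-2).choose k'') := by ring
    _ = N * ((N-1).choose (k''+1) * (k''+1)) := by rw [h1]
    _ = (N * (N-1).choose (k''+1)) * (k''+1) := by ring
    _ = (N.choose (k''+2) * (k''+2)) * (k''+1) := by rw [h2]
    _ = (k''+1+1) * (k''+1+1-1) * N.choose (k''+1+1) := by rw [estep]; ring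

/-- The barycenter of the Ising matrices `v vᵀ` over all sign vectors `v ∈ {−1,1}^N` with
exactly `k` entries equal to `−1` lies on the segment between the all-ones matrix `A₀`
and the identity `1_N`, with the stated coefficients. -/
theorem barycenter_k_ising (N k : ℕ) (hN : 2 ≤ N) (hk : k ≤ N) :
    ((1 : ℝ) / (N.choose k : ℝ)) •
      ∑ σ ∈ Finset.univ.filter
          (fun σ : Fin N → ({-1, 1} : Finset ℝ) =>
            (Finset.univ.filter fun i => (σ i : ℝ) = -1).card = k),
        vecMulVec (fun i => (σ i : ℝ)) (fun i => (σ i : ℝ)) =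
      (1 - 4 * (k : ℝ) * ((N : ℝ) - (k : ℝ)) / ((N : ℝ) * ((N : ℝ) - 1))) •
          Matrix.of (fun _ _ => (1 : ℝ)) +
        (4 * (k : ℝ) * ((N : ℝ) - (k : ℝ)) / ((N : ℝ) * ((N : ℝ) - 1))) •
          (1 : Matrix (Fin N) (Fin N) ℝ) := by
  have hval : ∀ σ : Fin N → ({-1, 1} : Finset ℝ), ∀ x, (σ x : ℝ) = -1 ∨ (σ x : ℝ) = 1 := by
    intro σ x
    have h := (σ x).2
    rw [Finset.mem_insert, Finset.mem_singleton] at h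
    exact h
  have hsum : (∑ σ ∈ Finset.univ.filter
          (fun σ : Fin N → ({-1, 1} : Finset ℝ) =>
            (Finset.univ.filter fun i => (σ i : ℝ) = -1).card = k),
        vecMulVec (fun i => (σ i : ℝ)) (fun i => (σ i : ℝ)))
      = ∑ S ∈ Finset.powersetCard k (Finset.univ : Finset (Fin N)),
          vecMulVec (fun i => if i ∈ S then (-1:ℝ) else 1)
            (fun i => if i ∈ S then (-1:ℝ) else 1) := by
    apply Finset.sum_nbij'
      (i := fun σ => Finset.univ.filter (fun i => (σ i : ℝ) = -1))
      (j := fun S => fun i =>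
        if i ∈ S then (⟨-1, by simp⟩ : ({-1, 1} : Finset ℝ)) else ⟨1, by simp⟩)
    · intro σ hσ
      simp only [Finset.mem_filter, Finset.mem_univ, true_and] at hσ
      simpa [Finset.mem_powersetCard_univ] using hσ
    · intro S hS
      simp only [Finset.mem_powersetCard_univ] at hS
      simp only [Finset.mem_filter, Finset.mem_univ, true_and]
      have hfil : (Finset.univ.filter fun x =>
          (((if x ∈ S then (⟨-1, by simp⟩ : ({-1, 1} : Finset ℝ)) else ⟨1, by simp⟩) : _) : ℝ)
            = -1) = S := by
        ext x
        by_cases hx : x ∈ S <;> simp [hx] <;> norm_num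
      rw [hfil, hS]
    · intro σ hσ
      funext x
      by_cases h : (σ x : ℝ) = -1
      · rw [if_pos (by simp [h])]
        exact Subtype.ext h.symm
      · have h1 : (σ x : ℝ) = 1 := (hval σ x).resolve_left h
        rw [if_neg (by simp [h])]
        exact Subtype.ext h1.symm
    · intro S hS
      ext x
      by_cases hx : x ∈ S <;> simp [hx] <;> norm_num
    · intro σ hσ
      have : (fun x => if x ∈ Finset.univ.filter (fun i => (σ i : ℝ) = -1) then (-1:ℝ) else 1)
          = fun x => (σ x : ℝ) := by
        funext x
        by_cases h : (σ x : ℝ) = -1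
        · simp [h]
        · have h1 : (σ x : ℝ) = 1 := (hval σ x).resolve_left h
          rw [if_neg (by simp [h]), h1]
      rw [this]
  rw [hsum]
  have hC : (0:ℝ) < (N.choose k : ℝ) := by exact_mod_cast Nat.choose_pos hk
  have hN0 : (N:ℝ) ≠ 0 := by positivity
  have hN1 : (N:ℝ) - 1 ≠ 0 := by
    have : (2:ℝ) ≤ (N:ℝ) := by exact_mod_cast hN
    linarith
  ext i j
  simp only [Matrix.smul_apply, Matrix.add_apply, Matrix.sum_apply, vecMulVec_apply,
    Matrix.of_apply, Matrix.one_apply, smul_eq_mul]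
  by_cases hij : i = j
  · subst hij
    have hone : ∀ S ∈ Finset.powersetCard k (Finset.univ : Finset (Fin N)),
        (if i ∈ S then (-1:ℝ) else 1) * (if i ∈ S then (-1:ℝ) else 1) = 1 := by
      intro S _
      split_ifs <;> norm_num
    rw [Finset.sum_congr rfl hone, Finset.sum_const, Finset.card_powersetCard,
      Finset.card_univ, Fintype.card_fin]
    simp only [if_pos rfl, if_true, nsmul_eq_mul, mul_one]
    field_simp
    ring
  · have hkey : ∀ S : Finset (Fin N),
        (if i ∈ S then (-1:ℝ) else 1) * (if j ∈ S then (-1:ℝ) else 1)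
        = 1 - 2 * (if i ∈ S then (1:ℝ) else 0) - 2 * (if j ∈ S then (1:ℝ) else 0)
          + 4 * (if i ∈ S ∧ j ∈ S then (1:ℝ) else 0) := by
      intro S
      by_cases h1 : i ∈ S <;> by_cases h2 : j ∈ S <;> simp [h1, h2] <;> norm_num
    rw [Finset.sum_congr rfl (fun S _ => hkey S)]
    rw [Finset.sum_add_distrib, Finset.sum_sub_distrib, Finset.sum_sub_distrib,
      ← Finset.mul_sum, ← Finset.mul_sum, ← Finset.mul_sum, Finset.sum_const,
      Finset.sum_boole, Finset.sum_boole, Finset.sum_boole,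
      Finset.card_powersetCard, Finset.card_univ, Fintype.card_fin]
    have h1 := count_one N k (by omega) i
    have h2 := count_one N k (by omega) j
    have h3 := count_two N k hN i j hij
    have h1' : ((Finset.powersetCard k (Finset.univ : Finset (Fin N))).filter
        (fun S => i ∈ S)).card * (N:ℝ) = (k:ℝ) * (N.choose k : ℝ) := by
      exact_mod_cast congrArg (Nat.cast : ℕ → ℝ) h1
    have h2' : ((Finset.powersetCard k (Finset.univ : Finset (Fin N))).filter
        (fun S => j ∈ S)).card * (N:ℝ) = (k:ℝ) * (N.choose k : ℝ) := by
      exact_mod_cast congrArg (Nat.cast : ℕ → ℝ) h2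
    have h3' : (((Finset.powersetCard k (Finset.univ : Finset (Fin N))).filter
        (fun S => i ∈ S ∧ j ∈ S)).card : ℝ) * ((N:ℝ) * ((N:ℝ) - 1))
        = (k:ℝ) * ((k:ℝ) - 1) * (N.choose k : ℝ) := by
      rcases Nat.eq_zero_or_pos k with hk0 | hk1
      · subst hk0
        simp only [Nat.zero_eq, Nat.cast_zero, zero_mul, Nat.mul_zero] at h3 ⊢
        have hpos : 0 < N * (N - 1) := Nat.mul_pos (by omega) (by omega)
        have : ((Finset.powersetCard 0 (Finset.univ : Finset (Fin N))).filter
            (fun S => i ∈ S ∧ j ∈ S)).card = 0 := by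
          by_contra hne
          have := Nat.mul_pos (Nat.pos_of_ne_zero hne) hpos
          omega
        rw [this]
        simp
      · have hcast := congrArg (Nat.cast : ℕ → ℝ) h3
        push_cast [Nat.cast_sub hk1, Nat.cast_sub (show 1 ≤ N by omega)] at hcast
        linarith [hcast]
    simp only [if_neg hij, nsmul_eq_mul, mul_one, mul_zero, add_zero]
    set c1 := (((Finset.powersetCard k (Finset.univ : Finset (Fin N))).filter
        (fun S => i ∈ S)).card : ℝ)
    set c2 := (((Finset.powersetCard k (Finset.univ : Finset (Fin N))).filter
        (fun S => j ∈ S)).card : ℝ)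
    set q := (((Finset.powersetCard k (Finset.univ : Finset (Fin N))).filter
        (fun S => i ∈ S ∧ j ∈ S)).card : ℝ)
    field_simp
    ring_nf
    nlinarith [h1', h2', h3', hC]
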